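/- For every ε ∈ (0,1) there exist constants μ₀ > 0 and, for each μ ≥ μ₀, a constant δ₀ = δ₀(ε,μ) > 0 such that for every 0 < δ ≤ δ₀ the function ψ(r,t) := 2 arctan( r/(e^t λ̄(t)) ) − 2 arctan( r^{1+ε}/(e^{(1+ε)t} μ) ), where λ̄(t) := ( (δ(1−ε)/2)(1 − e^{−2t}) )^{1/(1−ε)}, satisfies the supersolution inequality ∂ᵣᵣψ + (1/r)∂ᵣψ − sin(2ψ)/(2r²) − r ∂ᵣψ − ∂ₜψ ≤ 0 for all r ∈ (0,1) and t > 0. -/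

import Mathlib

open Real MeasureTheory Set Filter Topology

/-- Partial derivative in the radial variable `r`. -/
noncomputable def pr (φ : ℝ → ℝ → ℝ) (r t : ℝ) : ℝ := deriv (fun s => φ s t) r

/-- Second partial derivative in the radial variable `r`. -/
noncomputable def prr (φ : ℝ → ℝ → ℝ) (r t : ℝ) : ℝ :=
  deriv (fun s => deriv (fun s' => φ s' t) s) r

/-- Partial derivative in the time variable `t`. -/
noncomputable def pt (φ : ℝ → ℝ → ℝ) (r t : ℝ) : ℝ := deriv (fun s => φ r s) t

/-- The axisymmetric drift harmonic map heat equation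
`∂ₜφ + r ∂ᵣφ = ∂ᵣᵣφ + (1/r)∂ᵣφ − sin(2φ)/(2r²)` at the point `(r,t)`. -/
def SolvesDriftHM (φ : ℝ → ℝ → ℝ) (r t : ℝ) : Prop :=
  pt φ r t + r * pr φ r t =
    prr φ r t + (1 / r) * pr φ r t - Real.sin (2 * φ r t) / (2 * r ^ 2)

/-- The solution `λ̄(t) = ((δ(1−ε)/2)(1 − e^{−2t}))^{1/(1−ε)}` of `λ̄' = δ e^{−2t} λ̄^ε`,
`λ̄(0) = 0`. -/
noncomputable def lamBar (δ ε : ℝ) (t : ℝ) : ℝ :=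
  (δ * (1 - ε) / 2 * (1 - Real.exp (-2 * t))) ^ (1 / (1 - ε))

/-- The supersolution candidate
`ψ(r,t) = 2 arctan(r/(e^t λ̄(t))) − 2 arctan(r^{1+ε}/(e^{(1+ε)t} μ))`. -/
noncomputable def psiSuper (δ ε μ : ℝ) (r t : ℝ) : ℝ :=
  2 * Real.arctan (r / (Real.exp t * lamBar δ ε t))
    - 2 * Real.arctan (r ^ (1 + ε) / (Real.exp ((1 + ε) * t) * μ))

/-! ### Auxiliary lemmas -/

theorem sin_two_arctan' (x : ℝ) : Real.sin (2 * Real.arctan x) = 2*x/(1+x^2) := by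
  rw [Real.sin_two_mul, Real.sin_arctan, Real.cos_arctan]
  have h : Real.sqrt (1+x^2) * Real.sqrt (1+x^2) = 1 + x^2 := Real.mul_self_sqrt (by positivity)
  have h0 : Real.sqrt (1+x^2) ≠ 0 := by positivity
  field_simp
  rw [Real.sq_sqrt (by positivity)]

theorem cos_two_arctan' (x : ℝ) : Real.cos (2 * Real.arctan x) = (1-x^2)/(1+x^2) := by
  rw [Real.cos_two_mul, Real.cos_arctan]
  have h : Real.sqrt (1+x^2) * Real.sqrt (1+x^2) = 1 + x^2 := Real.mul_self_sqrt (by positivity)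
  have h0 : Real.sqrt (1+x^2) ≠ 0 := by positivity
  have h1 : (0:ℝ) < 1 + x^2 := by positivity
  field_simp
  nlinarith [h]

theorem one_sub_exp_pos' {t : ℝ} (ht : 0 < t) : 0 < 1 - Real.exp (-2*t) := by
  have : Real.exp (-2*t) < 1 := Real.exp_lt_one_iff.mpr (by linarith)
  linarith

theorem lamBar_pos' {δ ε t : ℝ} (hδ : 0 < δ) (hε1 : ε < 1) (ht : 0 < t) :
    0 < lamBar δ ε t := by
  apply Real.rpow_pos_of_pos
  have h1 := one_sub_exp_pos' ht
  have h2 : (0:ℝ) < 1 - ε := by linarith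
  positivity

theorem lamBar_hasDerivAt' {δ ε t : ℝ} (hδ : 0 < δ) (hε0 : 0 < ε) (hε1 : ε < 1) (ht : 0 < t) :
    HasDerivAt (lamBar δ ε) (δ * Real.exp (-2*t) * (lamBar δ ε t) ^ ε) t := by
  have h1ε : (0:ℝ) < 1 - ε := by linarith
  have hc1 : 1 ≤ 1/(1-ε) := by rw [le_div_iff₀ h1ε]; linarith
  have hlin : HasDerivAt (fun s : ℝ => -2*s) (-2 : ℝ) t := by
    simpa using (hasDerivAt_id t).const_mul (-2:ℝ)
  have hexp : HasDerivAt (fun s : ℝ => Real.exp (-2*s)) (Real.exp (-2*t) * (-2)) t := hlin.exp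
  have hi : HasDerivAt (fun s : ℝ => δ * (1-ε)/2 * (1 - Real.exp (-2*s)))
      (δ * (1-ε)/2 * (0 - Real.exp (-2*t) * (-2))) t :=
    ((hasDerivAt_const t (1:ℝ)).sub hexp).const_mul _
  have hipos : 0 < δ * (1-ε)/2 * (1 - Real.exp (-2*t)) := by
    have h1 := one_sub_exp_pos' ht
    positivity
  have houter := Real.hasDerivAt_rpow_const (x := δ * (1-ε)/2 * (1 - Real.exp (-2*t)))
      (p := 1/(1-ε)) (Or.inr hc1)
  have hcomp := houter.comp t hi
  have hval : 1/(1-ε) * (δ * (1-ε)/2 * (1 - Real.exp (-2*t))) ^ (1/(1-ε) - 1)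
      * (δ * (1-ε)/2 * (0 - Real.exp (-2*t) * (-2)))
      = δ * Real.exp (-2*t) * (lamBar δ ε t) ^ ε := by
    have he : 1/(1-ε) - 1 = 1/(1-ε) * ε := by field_simp; ring
    rw [he, Real.rpow_mul (le_of_lt hipos)]
    unfold lamBar
    field_simp
    ring
  rw [← hval]
  exact hcomp

theorem hD1 (P : ℝ) (hP : 0 < P) (s : ℝ) :
    HasDerivAt (fun x : ℝ => 2 * arctan (x / P)) (2*P/(P^2+s^2)) s := by
  have h := ((Real.hasDerivAt_arctan (s/P)).comp s ((hasDerivAt_id s).div_const P)).const_mul 2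
  refine h.congr_deriv ?_
  have h1 : (0:ℝ) < 1 + (s/P)^2 := by positivity
  field_simp

theorem hD2 (ε M : ℝ) (hM : 0 < M) (s : ℝ) (hs : 0 < s) :
    HasDerivAt (fun x : ℝ => 2 * arctan (x^(1+ε) / M))
      (2*(1+ε)*M*(s^(1+ε))/(s*(M^2+(s^(1+ε))^2))) s := by
  have hr : HasDerivAt (fun x : ℝ => x^(1+ε)) ((1+ε) * s^(1+ε-1)) s :=
    Real.hasDerivAt_rpow_const (Or.inl hs.ne')
  have h := ((Real.hasDerivAt_arctan (s^(1+ε)/M)).comp s (hr.div_const M)).const_mul 2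
  refine h.congr_deriv ?_
  have he : (1:ℝ)+ε-1 = ε := by ring
  rw [he]
  have hq : s^(1+ε) = s^ε * s := by
    rw [show (1:ℝ)+ε = ε+1 by ring, Real.rpow_add hs, Real.rpow_one]
  set qe := s^ε with hqe
  rw [hq]
  have h1 : (0:ℝ) < 1 + (qe*s/M)^2 := by positivity
  have hqe0 : 0 < qe := Real.rpow_pos_of_pos hs ε
  field_simp

theorem hD1' (P : ℝ) (hP : 0 < P) (r : ℝ) :
    HasDerivAt (fun s : ℝ => 2*P/(P^2+s^2)) (-4*P*r/(P^2+r^2)^2) r := by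
  have hden : HasDerivAt (fun s : ℝ => P^2+s^2) ((2:ℕ)*r^1) r :=
    (hasDerivAt_pow 2 r).const_add (P^2)
  have hne : P^2 + r^2 ≠ 0 := by positivity
  have h := (hasDerivAt_const r (2*P)).div hden hne
  refine h.congr_deriv ?_
  field_simp
  ring

theorem hD2' (ε M : ℝ) (hM : 0 < M) (r : ℝ) (hr : 0 < r) :
    HasDerivAt (fun s : ℝ => 2*(1+ε)*M*(s^(1+ε))/(s*(M^2+(s^(1+ε))^2)))
      (2*M*(1+ε)*( ε*(r^(1+ε))/(r^2*(M^2+(r^(1+ε))^2))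
        - 2*(1+ε)*(r^(1+ε))^3/(r^2*(M^2+(r^(1+ε))^2)^2) )) r := by
  have hrp : HasDerivAt (fun x : ℝ => x^(1+ε)) ((1+ε) * r^(1+ε-1)) r :=
    Real.hasDerivAt_rpow_const (Or.inl hr.ne')
  have hN : HasDerivAt (fun s : ℝ => 2*(1+ε)*M*s^(1+ε)) (2*(1+ε)*M*((1+ε) * r^(1+ε-1))) r :=
    hrp.const_mul _
  have hD : HasDerivAt (fun s : ℝ => s*(M^2+(s^(1+ε))^2))
      (1*(M^2+(r^(1+ε))^2) + r*((2:ℕ)*(r^(1+ε))^1*((1+ε) * r^(1+ε-1)))) r :=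
    (hasDerivAt_id r).mul ((hrp.pow 2).const_add (M^2))
  have hq0 : 0 < r^(1+ε) := Real.rpow_pos_of_pos hr _
  have hne : r*(M^2+(r^(1+ε))^2) ≠ 0 := by positivity
  have h := hN.div hD hne
  refine h.congr_deriv ?_
  have he : (1:ℝ)+ε-1 = ε := by ring
  rw [he]
  have hq : r^(1+ε) = r^ε * r := by
    rw [show (1:ℝ)+ε = ε+1 by ring, Real.rpow_add hr, Real.rpow_one]
  set qe := r^ε with hqe
  rw [hq]
  have hqe0 : 0 < qe := Real.rpow_pos_of_pos hr ε
  have h2 : (0:ℝ) < M^2 + (qe*r)^2 := by positivity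
  field_simp
  ring

theorem rpow_sin_bound {X ε : ℝ} (hX : 0 < X) (hε0 : 0 < ε) (hε1 : ε < 1) :
    2*X/(1+X^2) ≤ 2*X^(ε-1) := by
  have h1 : (0:ℝ) < 1 + X^2 := by positivity
  rw [div_le_iff₀ h1]
  have key : X ≤ X^(ε-1) * (1+X^2) := by
    rcases le_or_gt X 1 with h | h
    · have h2 : 1 ≤ X^(ε-1) :=
        Real.one_le_rpow_of_pos_of_le_one_of_nonpos hX h (by linarith)
      nlinarith [sq_nonneg X]
    · have h2 : X^(1:ℝ) ≤ X^(ε+1) :=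
        Real.rpow_le_rpow_of_exponent_le (le_of_lt h) (by linarith)
      have h3 : X^(ε+1) = X^(ε-1) * X^2 := by
        rw [show ε+1 = (ε-1)+2 by ring, Real.rpow_add hX]
        norm_num
      have h4 : X^(1:ℝ) = X := Real.rpow_one X
      have h5 : (0:ℝ) ≤ X^(ε-1) := (Real.rpow_pos_of_pos hX (ε-1)).le
      calc X = X^(1:ℝ) := h4.symm
        _ ≤ X^(ε+1) := h2
        _ = X^(ε-1)*X^2 := h3
        _ ≤ X^(ε-1)*(1+X^2) := by nlinarith [h5]
  nlinarith [key]
theorem hDt (δ ε μ r : ℝ) {t : ℝ} (hδ : 0 < δ) (hε0 : 0 < ε) (hε1 : ε < 1)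
    (hμ : 0 < μ) (ht : 0 < t) (hr : 0 < r) :
    HasDerivAt (fun s => psiSuper δ ε μ r s)
      (-2*r*((Real.exp t * lamBar δ ε t) + Real.exp t * (δ * Real.exp (-2*t) * (lamBar δ ε t)^ε))
          /((Real.exp t * lamBar δ ε t)^2 + r^2)
        + 2*(1+ε)*(r^(1+ε))*(Real.exp ((1+ε)*t)*μ)
          /((Real.exp ((1+ε)*t)*μ)^2 + (r^(1+ε))^2)) t := by
  have hL0 : 0 < lamBar δ ε t := lamBar_pos' hδ hε1 ht
  have hL := lamBar_hasDerivAt' hδ hε0 hε1 ht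
  set L := lamBar δ ε t
  set L' := δ * Real.exp (-2*t) * L^ε with hL'def
  have hP1 : HasDerivAt (fun s => Real.exp s * lamBar δ ε s)
      (Real.exp t * L + Real.exp t * L') t := (Real.hasDerivAt_exp t).mul hL
  have hPne : Real.exp t * L ≠ 0 := by positivity
  have h1 : HasDerivAt (fun s => r / (Real.exp s * lamBar δ ε s))
      ((0 * (Real.exp t * L) - r * (Real.exp t * L + Real.exp t * L'))/(Real.exp t * L)^2) t :=
    (hasDerivAt_const t r).div hP1 hPne
  have h1' := ((Real.hasDerivAt_arctan (r / (Real.exp t * L))).comp t h1).const_mul 2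
  have hlin : HasDerivAt (fun s : ℝ => (1+ε)*s) ((1+ε) : ℝ) t := by
    simpa using (hasDerivAt_id t).const_mul (1+ε)
  have hexp2 : HasDerivAt (fun s : ℝ => Real.exp ((1+ε)*s)) (Real.exp ((1+ε)*t) * (1+ε)) t :=
    hlin.exp
  have hM1 : HasDerivAt (fun s : ℝ => Real.exp ((1+ε)*s) * μ)
      (Real.exp ((1+ε)*t) * (1+ε) * μ) t := hexp2.mul_const μ
  have hMne : Real.exp ((1+ε)*t) * μ ≠ 0 := by positivity
  have h2 : HasDerivAt (fun s => r^(1+ε) / (Real.exp ((1+ε)*s) * μ))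
      ((0 * (Real.exp ((1+ε)*t) * μ) - r^(1+ε) * (Real.exp ((1+ε)*t) * (1+ε) * μ))
        /(Real.exp ((1+ε)*t) * μ)^2) t :=
    (hasDerivAt_const t (r^(1+ε))).div hM1 hMne
  have h2' := ((Real.hasDerivAt_arctan (r^(1+ε) / (Real.exp ((1+ε)*t) * μ))).comp t h2).const_mul 2
  have hcomb := h1'.sub h2'
  have hfun : (fun s => 2 * Real.arctan (r / (Real.exp s * lamBar δ ε s))
      - 2 * Real.arctan (r^(1+ε) / (Real.exp ((1+ε)*s) * μ)))
      = fun s => psiSuper δ ε μ r s := by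
    funext s; simp only [psiSuper]
  simp only [Function.comp] at hcomb
  rw [← hfun]
  refine hcomb.congr_deriv ?_
  have hq0 : 0 < r^(1+ε) := Real.rpow_pos_of_pos hr _
  have he1 : (0:ℝ) < Real.exp t * L := by positivity
  have he2 : (0:ℝ) < Real.exp ((1+ε)*t) * μ := by positivity
  have hx1 : (0:ℝ) < 1 + (r/(Real.exp t * L))^2 := by positivity
  have hx2 : (0:ℝ) < 1 + (r^(1+ε)/(Real.exp ((1+ε)*t) * μ))^2 := by positivity
  field_simp
  ring

theorem sin_four_arctan (x : ℝ) :
    Real.sin (2*(2*Real.arctan x)) = 2*(2*x/(1+x^2))*((1-x^2)/(1+x^2)) := by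
  rw [Real.sin_two_mul, sin_two_arctan', cos_two_arctan']

theorem cos_four_arctan (x : ℝ) :
    Real.cos (2*(2*Real.arctan x)) = 2*((1-x^2)/(1+x^2))^2-1 := by
  rw [Real.cos_two_mul, cos_two_arctan']

set_option maxHeartbeats 1000000 in
theorem grand_identity {r P M q K e : ℝ} (hr : r ≠ 0) (hP : P ≠ 0)
    (hPr : P^2 + r^2 ≠ 0) (hMq : M^2 + q^2 ≠ 0) :
    (-4*P*r/(P^2+r^2)^2 - (2*M*(1+e)*( e*q/(r^2*(M^2+q^2)) - 2*(1+e)*q^3/(r^2*(M^2+q^2)^2) )))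
      + (1/r) * (2*P/(P^2+r^2) - 2*(1+e)*M*q/(r*(M^2+q^2)))
      - (2*(2*r*P/(P^2+r^2))*((P^2-r^2)/(P^2+r^2))*(2*((M^2-q^2)/(M^2+q^2))^2-1)
          - (2*((P^2-r^2)/(P^2+r^2))^2-1)*(2*(2*q*M/(M^2+q^2))*((M^2-q^2)/(M^2+q^2))))/(2*r^2)
      - r * (2*P/(P^2+r^2) - 2*(1+e)*M*q/(r*(M^2+q^2)))
      - (-2*r*(P+K)/(P^2+r^2) + 2*(1+e)*q*M/(M^2+q^2))
    = -(e*(2+e))*(2*q*M/(M^2+q^2))*((M^2-q^2)/(M^2+q^2))/r^2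
      - 2*(2*r*P/(P^2+r^2))*(2*q*M/(M^2+q^2))
          *((2*r*P/(P^2+r^2))*((M^2-q^2)/(M^2+q^2)) - ((P^2-r^2)/(P^2+r^2))*(2*q*M/(M^2+q^2)))/r^2
      + (K/P)*(2*r*P/(P^2+r^2)) := by
  field_simp
  ring


set_option maxHeartbeats 4000000

/-- Lemma 4.1(iii): for every `ε ∈ (0,1)` there exist `μ₀ > 0` and, for each `μ ≥ μ₀`, a
`δ₀ > 0` such that for all `0 < δ ≤ δ₀` the function `ψ` is a supersolution of the
axisymmetric drift harmonic map heat equation on `(0,1) × (0,∞)`. -/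
theorem psi_is_supersolution :
    ∀ ε ∈ Set.Ioo (0:ℝ) 1, ∃ μ₀ > (0:ℝ), ∀ μ ≥ μ₀, ∃ δ₀ > (0:ℝ),
      ∀ δ : ℝ, 0 < δ → δ ≤ δ₀ →
        ∀ r ∈ Set.Ioo (0:ℝ) 1, ∀ t > (0:ℝ),
          prr (psiSuper δ ε μ) r t + (1 / r) * pr (psiSuper δ ε μ) r t
            - Real.sin (2 * psiSuper δ ε μ r t) / (2 * r ^ 2)
            - r * pr (psiSuper δ ε μ) r t - pt (psiSuper δ ε μ) r t ≤ 0 := by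
  intro ε hε
  obtain ⟨hε0, hε1⟩ := hε
  have hε2 : (0:ℝ) < ε*(2+ε) := mul_pos hε0 (by linarith)
  refine ⟨16 + 16/(ε*(2+ε)), by positivity, fun μ hμ => ?_⟩
  have hμpos : (0:ℝ) < μ := lt_of_lt_of_le (by positivity) hμ
  refine ⟨ε*(2+ε)/(8*μ), by positivity, fun δ hδ0 hδδ0 r hrm t ht => ?_⟩
  obtain ⟨hr0, hr1⟩ := hrm
  have hL0 : 0 < lamBar δ ε t := lamBar_pos' hδ0 hε1 ht
  set L := lamBar δ ε t with hLdef
  set P := Real.exp t * L with hPdef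
  set M := Real.exp ((1+ε)*t) * μ with hMdef
  set K := Real.exp t * (δ * Real.exp (-2*t) * L^ε) with hKdef
  have hP : 0 < P := by positivity
  have hK0 : 0 ≤ K := by positivity
  have hexpt1 : (1:ℝ) ≤ Real.exp ((1+ε)*t) := by
    have h := Real.add_one_le_exp ((1+ε)*t)
    have h2 : 0 ≤ (1+ε)*t := mul_nonneg (by linarith) ht.le
    linarith
  have hμ16 : (16:ℝ) ≤ μ := by
    have h : (0:ℝ) < 16/(ε*(2+ε)) := by positivity
    linarith
  have hMexp : μ ≤ Real.exp ((1+ε)*t) * μ := by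
    have h := mul_le_mul_of_nonneg_right hexpt1 hμpos.le
    rw [one_mul] at h
    exact h
  have hMμ : μ ≤ M := by rw [hMdef]; exact hMexp
  have hM16 : (16:ℝ) ≤ M := le_trans hμ16 hMμ
  have hM : (0:ℝ) < M := by linarith
  have hq0 : 0 < r^(1+ε) := Real.rpow_pos_of_pos hr0 _
  have hq1 : r^(1+ε) < 1 := Real.rpow_lt_one hr0.le hr1 (by linarith)
  have hPr2 : (0:ℝ) < P^2 + r^2 := by positivity
  have hMq2 : (0:ℝ) < M^2 + (r^(1+ε))^2 := by positivity
  -- the function of r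
  have hfunr : (fun x => psiSuper δ ε μ x t)
      = fun x => 2*Real.arctan (x/P) - 2*Real.arctan (x^(1+ε)/M) := by
    funext x
    simp only [psiSuper, ← hLdef, ← hPdef, ← hMdef]
  -- first radial derivative
  have hg : ∀ s, 0 < s → HasDerivAt (fun x => psiSuper δ ε μ x t)
      (2*P/(P^2+s^2) - 2*(1+ε)*M*(s^(1+ε))/(s*(M^2+(s^(1+ε))^2))) s := by
    intro s hs
    rw [hfunr]
    exact (hD1 P hP s).sub (hD2 ε M hM s hs)
  have hpr : pr (psiSuper δ ε μ) r t
      = 2*P/(P^2+r^2) - 2*(1+ε)*M*(r^(1+ε))/(r*(M^2+(r^(1+ε))^2)) := by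
    unfold pr
    exact (hg r hr0).deriv
  -- second radial derivative
  have hprr : prr (psiSuper δ ε μ) r t
      = -4*P*r/(P^2+r^2)^2 - (2*M*(1+ε)*( ε*(r^(1+ε))/(r^2*(M^2+(r^(1+ε))^2))
          - 2*(1+ε)*(r^(1+ε))^3/(r^2*(M^2+(r^(1+ε))^2)^2) )) := by
    unfold prr
    have hev : (fun s => deriv (fun x => psiSuper δ ε μ x t) s)
        =ᶠ[nhds r] (fun s => 2*P/(P^2+s^2) - 2*(1+ε)*M*(s^(1+ε))/(s*(M^2+(s^(1+ε))^2))) := by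
      filter_upwards [Ioi_mem_nhds hr0] with s hs
      exact (hg s hs).deriv
    rw [Filter.EventuallyEq.deriv_eq hev]
    exact ((hD1' P hP r).sub (hD2' ε M hM r hr0)).deriv
  -- time derivative
  have hpt : pt (psiSuper δ ε μ) r t
      = -2*r*(P+K)/(P^2+r^2) + 2*(1+ε)*(r^(1+ε))*M/(M^2+(r^(1+ε))^2) := by
    unfold pt
    have h := hDt δ ε μ r hδ0 hε0 hε1 hμpos ht hr0
    rw [← hLdef, ← hPdef, ← hMdef, ← hKdef] at h
    exact h.deriv
  -- value of psi and the sine term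
  have hpsival : psiSuper δ ε μ r t = 2*Real.arctan (r/P) - 2*Real.arctan ((r^(1+ε))/M) := by
    simp only [psiSuper, ← hLdef, ← hPdef, ← hMdef]
  have hsin : Real.sin (2 * psiSuper δ ε μ r t)
      = 2*(2*r*P/(P^2+r^2))*((P^2-r^2)/(P^2+r^2))
          *(2*((M^2-(r^(1+ε))^2)/(M^2+(r^(1+ε))^2))^2-1)
        - (2*((P^2-r^2)/(P^2+r^2))^2-1)
          *(2*(2*(r^(1+ε))*M/(M^2+(r^(1+ε))^2))*((M^2-(r^(1+ε))^2)/(M^2+(r^(1+ε))^2))) := by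
    rw [hpsival,
      show 2*(2*Real.arctan (r/P) - 2*Real.arctan ((r^(1+ε))/M))
        = 2*(2*Real.arctan (r/P)) - 2*(2*Real.arctan ((r^(1+ε))/M)) by ring,
      Real.sin_sub, sin_four_arctan, cos_four_arctan, sin_four_arctan, cos_four_arctan]
    have h1 : (0:ℝ) < 1 + (r/P)^2 := by positivity
    have h2 : (0:ℝ) < 1 + (r^(1+ε)/M)^2 := by positivity
    field_simp
  -- the key algebraic identity
  have hEq : prr (psiSuper δ ε μ) r t + (1 / r) * pr (psiSuper δ ε μ) r t
      - Real.sin (2 * psiSuper δ ε μ r t) / (2 * r ^ 2)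
      - r * pr (psiSuper δ ε μ) r t - pt (psiSuper δ ε μ) r t
      = -(ε*(2+ε))*(2*(r^(1+ε))*M/(M^2+(r^(1+ε))^2))*((M^2-(r^(1+ε))^2)/(M^2+(r^(1+ε))^2))/r^2
        - 2*(2*r*P/(P^2+r^2))*(2*(r^(1+ε))*M/(M^2+(r^(1+ε))^2))
            *((2*r*P/(P^2+r^2))*((M^2-(r^(1+ε))^2)/(M^2+(r^(1+ε))^2))
              - ((P^2-r^2)/(P^2+r^2))*(2*(r^(1+ε))*M/(M^2+(r^(1+ε))^2)))/r^2
        + (K/P)*(2*r*P/(P^2+r^2)) := by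
    rw [hprr, hpr, hpt, hsin]
    exact grand_identity hr0.ne' hP.ne' hPr2.ne' hMq2.ne'
  rw [hEq]
  clear hEq hsin hpsival hpt hprr hpr hg hfunr
  -- names for the trigonometric quantities
  set sx := 2*r*P/(P^2+r^2) with hsxdef
  set cx := (P^2-r^2)/(P^2+r^2) with hcxdef
  set sy := 2*(r^(1+ε))*M/(M^2+(r^(1+ε))^2) with hsydef
  set cy := (M^2-(r^(1+ε))^2)/(M^2+(r^(1+ε))^2) with hcydef
  set y := r^(1+ε)/M with hydef
  -- basic bounds
  have hy0 : 0 ≤ y := by rw [hydef]; positivity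
  have hqsq : (r^(1+ε))^2 ≤ 1 := by nlinarith only [hq0, hq1]
  have hM2 : (256:ℝ) ≤ M^2 := by nlinarith only [hM16]
  have hsx0 : 0 ≤ sx := by
    rw [hsxdef]
    exact div_nonneg (by positivity) hPr2.le
  have hsx1 : sx ≤ 1 := by
    rw [hsxdef, div_le_one hPr2]
    linarith only [sq_nonneg (P-r)]
  have hcx1 : cx ≤ 1 := by
    rw [hcxdef, div_le_one hPr2]
    linarith only [sq_nonneg r]
  have hsy0 : 0 ≤ sy := by
    rw [hsydef]
    exact div_nonneg (mul_nonneg (mul_nonneg (by norm_num) hq0.le) hM.le) hMq2.le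
  have hcy0 : 0 ≤ cy := by
    rw [hcydef]
    apply div_nonneg _ hMq2.le
    linarith only [hqsq, hM2]
  have hcyhalf : 1/2 ≤ cy := by
    rw [hcydef, le_div_iff₀ hMq2]
    linarith only [hqsq, hM2]
  have h2y : 2*y = 2*(r^(1+ε))/M := by rw [hydef]; ring
  have hq3 : 0 < r^(1+ε)*(r^(1+ε))^2 := mul_pos hq0 (by positivity)
  have hsyle : sy ≤ 2*y := by
    rw [hsydef, h2y, div_le_div_iff₀ hMq2 hM]
    linarith only [hq3]
  have hsyge : y ≤ sy := by
    rw [hsydef, hydef, div_le_div_iff₀ hM hMq2]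
    have e1 : r^(1+ε)*(r^(1+ε))^2 ≤ r^(1+ε)*1 := mul_le_mul_of_nonneg_left hqsq hq0.le
    have e2 : r^(1+ε)*1 ≤ r^(1+ε)*M^2 := mul_le_mul_of_nonneg_left (by linarith) hq0.le
    linarith only [e1, e2]
  have hKP0 : 0 ≤ K/P := by positivity
  -- bound on the drift term
  have hsxle : sx ≤ 2*(r/P)^(ε-1) := by
    have h : sx = 2*(r/P)/(1+(r/P)^2) := by
      rw [hsxdef]
      field_simp
    rw [h]
    exact rpow_sin_bound (by positivity) hε0 hε1
  have hLε : (0:ℝ) < L^(ε-1) := Real.rpow_pos_of_pos hL0 _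
  have hKP : K/P = δ*Real.exp (-2*t)*L^(ε-1) := by
    rw [hKdef, hPdef, mul_div_mul_left _ _ (Real.exp_ne_zero t),
      Real.rpow_sub hL0, Real.rpow_one]
    ring
  have hrPpow : (r/P)^(ε-1) = r^(ε-1)/(Real.exp (t*(ε-1))*L^(ε-1)) := by
    rw [Real.div_rpow hr0.le hP.le, hPdef, Real.mul_rpow (Real.exp_pos t).le hL0.le,
      ← Real.exp_mul]
  have hE : Real.exp (-(1+ε)*t) = Real.exp (-2*t)/Real.exp (t*(ε-1)) := by
    rw [← Real.exp_sub]
    congr 1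
    ring
  have hKPval : (K/P)*(2*(r/P)^(ε-1)) = 2*(δ*Real.exp (-(1+ε)*t)*r^(ε-1)) := by
    rw [hKP, hrPpow, hE]
    have h1 := Real.exp_ne_zero (-2*t)
    have h2 := Real.exp_ne_zero (t*(ε-1))
    field_simp
  have hB1 : (K/P)*sx ≤ 2*(δ*Real.exp (-(1+ε)*t)*r^(ε-1)) := by
    calc (K/P)*sx ≤ (K/P)*(2*(r/P)^(ε-1)) := mul_le_mul_of_nonneg_left hsxle hKP0
      _ = 2*(δ*Real.exp (-(1+ε)*t)*r^(ε-1)) := hKPval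
  -- bound on y
  have hqM : y ≤ ε*(2+ε)/16 := by
    rw [hydef, div_le_div_iff₀ hM (by norm_num : (0:ℝ) < 16)]
    have h0 : 16/(ε*(2+ε))*(ε*(2+ε)) = 16 := div_mul_cancel₀ _ hε2.ne'
    have ha : 16/(ε*(2+ε)) ≤ μ := by linarith only [hμ, hε2]
    have hb := mul_le_mul_of_nonneg_right ha hε2.le
    have h1 : 16 ≤ μ*(ε*(2+ε)) := by linarith only [hb, h0]
    have h2 := mul_le_mul_of_nonneg_right hMμ hε2.le
    have h3 : r^(1+ε)*16 ≤ 16 := by linarith only [hq1]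
    linarith only [h1, h2, h3]
  -- the numerator bound
  have hsxcx : sx*cx ≤ 1 := by
    have h := mul_le_mul_of_nonneg_left hcx1 hsx0
    rw [mul_one] at h
    linarith only [h, hsx1]
  have hstep1 : -2*sx*sy*(sx*cy - cx*sy) ≤ 2*sy^2 := by
    have e1 : 0 ≤ sx*(sx*(sy*cy)) :=
      mul_nonneg hsx0 (mul_nonneg hsx0 (mul_nonneg hsy0 hcy0))
    have e3 : (sx*cx)*sy^2 ≤ 1*sy^2 := mul_le_mul_of_nonneg_right hsxcx (sq_nonneg sy)
    linarith only [e1, e3]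
  have hstep2 : 2*sy^2 ≤ 4*sy*y := by
    have h := mul_le_mul_of_nonneg_left hsyle hsy0
    nlinarith only [h]
  have hstep3 : -(ε*(2+ε))*sy*cy ≤ -(ε*(2+ε))*sy*(1/2) := by
    have h := mul_le_mul_of_nonneg_left hcyhalf (mul_nonneg hε2.le hsy0)
    nlinarith only [h]
  have hstep4 : 4*sy*y ≤ 4*sy*(ε*(2+ε)/16) := by
    have h := mul_le_mul_of_nonneg_left hqM hsy0
    nlinarith only [h]
  have hstep6 : -(ε*(2+ε)/4)*sy ≤ -(ε*(2+ε)/4)*y := by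
    have h := mul_le_mul_of_nonneg_left hsyge (by positivity : (0:ℝ) ≤ ε*(2+ε)/4)
    nlinarith only [h]
  have hnum : -(ε*(2+ε))*sy*cy - 2*sx*sy*(sx*cy - cx*sy) ≤ -(ε*(2+ε)/4)*y := by
    linarith only [hstep1, hstep2, hstep3, hstep4, hstep6]
  -- put the two negative powers of r together
  have hr2 : (0:ℝ) < r^2 := by positivity
  have hdivstep : -(ε*(2+ε))*sy*cy/r^2 - 2*sx*sy*(sx*cy - cx*sy)/r^2
      ≤ (-(ε*(2+ε)/4)*y)/r^2 := by
    rw [div_sub_div_same, div_le_div_iff₀ hr2 hr2]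
    exact mul_le_mul_of_nonneg_right hnum hr2.le
  -- final computation
  have hq2 : r^(1+ε)/r^2 = r^(ε-1) := by
    rw [← Real.rpow_natCast r 2, ← Real.rpow_sub hr0]
    congr 1
    push_cast
    ring
  have hA : (0:ℝ) < r^(ε-1) := Real.rpow_pos_of_pos hr0 _
  have hyr2 : y/r^2 = r^(ε-1)*Real.exp (-(1+ε)*t)/μ := by
    rw [hydef, div_div, mul_comm M (r^2), ← div_div, hq2, hMdef,
      show -(1+ε)*t = -((1+ε)*t) by ring, Real.exp_neg]
    have h1 := Real.exp_ne_zero ((1+ε)*t)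
    field_simp
  have hEexp : (0:ℝ) < Real.exp (-(1+ε)*t) := Real.exp_pos _
  have h2δ : 2*δ ≤ ε*(2+ε)/(4*μ) := by
    have h : 2*(ε*(2+ε)/(8*μ)) = ε*(2+ε)/(4*μ) := by ring
    linarith
  have hfin : (-(ε*(2+ε)/4)*y)/r^2 + 2*(δ*Real.exp (-(1+ε)*t)*r^(ε-1)) ≤ 0 := by
    have hrw : (-(ε*(2+ε)/4)*y)/r^2 = -(ε*(2+ε)/(4*μ))*(Real.exp (-(1+ε)*t)*r^(ε-1)) := by
      rw [show (-(ε*(2+ε)/4)*y)/r^2 = -(ε*(2+ε)/4)*(y/r^2) by ring, hyr2]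
      field_simp
    rw [hrw]
    have hAE : (0:ℝ) < Real.exp (-(1+ε)*t)*r^(ε-1) := by positivity
    have h := mul_le_mul_of_nonneg_right h2δ hAE.le
    nlinarith only [h]
  linarith only [hdivstep, hB1, hfin]
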